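/- Let x_1,...,x_n be independent real random variables with continuous CDFs F_1,...,F_n, let F̂ be their empirical CDF, and let φ = max_i ‖F_i − F_n‖_∞. For any γ, δ ∈ (0,1) and ε ∈ (0,1), with probability at least 1 − δ: F_n(Q⁺_γ(F̂)) − γ ≤ φ + (1−ε)^{-1}[√(2γ(1−γ)log(1/δ)/n) + (2/3 + 1/(2ε))·log(1/δ)/n]. -/

import Mathlib

open MeasureTheory ProbabilityTheory

noncomputable def Qplus (γ : ℝ) (F : ℝ → ℝ) : ℝ := sInf {x | γ < F x}

noncomputable def ecdf {n : ℕ} (x : Fin n → ℝ) (t : ℝ) : ℝ :=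
  ((Finset.univ.filter (fun i => x i ≤ t)).card : ℝ) / n

lemma kl_deriv_aux {γ a : ℝ} (hγ0 : 0 < γ) (ha : 0 < a) (h1 : γ + a < 1) :
    ∀ p ∈ Set.Icc γ (γ + a),
    HasDerivAt (fun p => γ * Real.log γ + (1-γ) * Real.log (1-γ) - γ * Real.log p
        - (1-γ) * Real.log (1-p) - (p-γ)^2/(2*(γ*(1-γ)+(p-γ))))
      ((p-γ)/(p*(1-p)) - (p-γ)*(2*(γ*(1-γ)) + (p-γ))/(2*(γ*(1-γ)+(p-γ))^2)) p := by
  intro p hp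
  obtain ⟨hp1, hp2⟩ := hp
  have hp0 : 0 < p := lt_of_lt_of_le hγ0 hp1
  have hp1' : p < 1 := lt_of_le_of_lt hp2 h1
  have hv : 0 < γ * (1-γ) := mul_pos hγ0 (by linarith)
  have hden : 0 < γ*(1-γ) + (p-γ) := by nlinarith
  have h1' : HasDerivAt (fun p : ℝ => γ * Real.log p) (γ * p⁻¹) p :=
    (Real.hasDerivAt_log hp0.ne').const_mul γ
  have hinner : HasDerivAt (fun p : ℝ => 1 - p) (-1) p := by
    simpa using (hasDerivAt_id p).const_sub 1
  have h2' : HasDerivAt (fun p : ℝ => (1-γ) * Real.log (1-p)) ((1-γ) * ((1-p)⁻¹ * (-1))) p :=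
    ((Real.hasDerivAt_log (by linarith : (1:ℝ) - p ≠ 0)).comp p hinner).const_mul (1-γ)
  have hnum : HasDerivAt (fun p : ℝ => (p-γ)^2) (2*(p-γ)) p := by
    have : HasDerivAt (fun p : ℝ => p - γ) 1 p := by simpa using (hasDerivAt_id p).sub_const γ
    simpa using (this.fun_pow 2)
  have hden' : HasDerivAt (fun p : ℝ => 2*(γ*(1-γ)+(p-γ))) 2 p := by
    have : HasDerivAt (fun p : ℝ => γ*(1-γ)+(p-γ)) 1 p := by
      simpa using ((hasDerivAt_id p).sub_const γ).const_add (γ*(1-γ))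
    simpa using this.const_mul 2
  have hq : HasDerivAt (fun p : ℝ => (p-γ)^2/(2*(γ*(1-γ)+(p-γ))))
      ((2*(p-γ)*(2*(γ*(1-γ)+(p-γ))) - (p-γ)^2*2)/(2*(γ*(1-γ)+(p-γ)))^2) p :=
    hnum.div hden' (by positivity)
  have := ((((hasDerivAt_const p (γ * Real.log γ + (1-γ) * Real.log (1-γ))).sub h1').sub h2').sub hq)
  have e1 : p ≠ 0 := hp0.ne'
  have e2 : (1:ℝ) - p ≠ 0 := by linarith
  have e3 : γ*(1-γ) + (p-γ) ≠ 0 := hden.ne'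
  refine this.congr_deriv ?_
  field_simp
  ring

lemma kl_ge {γ a : ℝ} (hγ0 : 0 < γ) (ha : 0 < a) (h1 : γ + a < 1) :
    a^2/(2*(γ*(1-γ)+a)) ≤ γ * Real.log (γ/(γ+a)) + (1-γ) * Real.log ((1-γ)/(1-γ-a)) := by
  set f : ℝ → ℝ := fun p => γ * Real.log γ + (1-γ) * Real.log (1-γ) - γ * Real.log p
      - (1-γ) * Real.log (1-p) - (p-γ)^2/(2*(γ*(1-γ)+(p-γ))) with hf
  have key := kl_deriv_aux hγ0 ha h1
  have hmono : MonotoneOn f (Set.Icc γ (γ+a)) := by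
    apply monotoneOn_of_deriv_nonneg (convex_Icc _ _)
    · exact fun p hp => (key p hp).continuousAt.continuousWithinAt
    · intro p hp
      rw [interior_Icc] at hp
      exact ((key p (Set.mem_Icc_of_Ioo hp)).differentiableAt).differentiableWithinAt
    · intro p hp
      rw [interior_Icc] at hp
      rw [(key p (Set.mem_Icc_of_Ioo hp)).deriv]
      obtain ⟨hp1, hp2⟩ := hp
      have hw : 0 ≤ p - γ := by linarith
      have hp0 : 0 < p := lt_trans hγ0 hp1
      have hp1' : p < 1 := lt_trans hp2 h1
      have hv : 0 < γ * (1-γ) := mul_pos hγ0 (by linarith)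
      have hd1 : 0 < p * (1-p) := mul_pos hp0 (by linarith)
      have hd2 : 0 < 2*(γ*(1-γ)+(p-γ))^2 := by positivity
      rw [sub_nonneg, div_le_div_iff₀ hd2 hd1]
      nlinarith [mul_nonneg hw (mul_nonneg hw hw), mul_nonneg hw hw,
        mul_nonneg (mul_nonneg hw hw) hγ0.le, mul_nonneg hw hv.le,
        mul_nonneg (mul_nonneg hw hγ0.le) hw, sq_nonneg (p - γ),
        mul_pos hv hv, mul_nonneg hw hγ0.le]
  have h0 : f γ ≤ f (γ + a) :=
    hmono (Set.left_mem_Icc.2 (by linarith)) (Set.right_mem_Icc.2 (by linarith)) (by linarith)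
  have hfγ : f γ = 0 := by simp [hf]
  have hγa : (0:ℝ) < γ + a := by linarith
  have h1γ : (0:ℝ) < 1 - γ := by linarith
  have h1γa : (0:ℝ) < 1 - γ - a := by linarith
  rw [hfγ, hf] at h0
  simp only at h0
  rw [Real.log_div hγ0.ne' hγa.ne', Real.log_div h1γ.ne' (by linarith : (1:ℝ)-γ-a ≠ 0)]
  have : (1:ℝ) - (γ + a) = 1 - γ - a := by ring
  rw [this] at h0
  have : γ + a - γ = a := by ring
  rw [this] at h0
  linarith

lemma cond_chain {γ ε ℓ B : ℝ} (hγ0 : 0 < γ) (hγ1 : γ < 1) (hε0 : 0 < ε) (hε1 : ε < 1)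
    (hℓ : 0 < ℓ)
    (hB : B = (1-ε)⁻¹ * (Real.sqrt (2*γ*(1-γ)*ℓ) + (2/3 + 1/(2*ε))*ℓ)) :
    2*(γ*(1-γ)+B)*ℓ ≤ B^2 := by
  have h1ε : (0:ℝ) < 1 - ε := by linarith
  have hv : 0 < γ * (1-γ) := mul_pos hγ0 (by linarith)
  have h1γ : (0:ℝ) < 1 - γ := by linarith
  have hs0 : (0:ℝ) ≤ 2*γ*(1-γ)*ℓ := by nlinarith [mul_nonneg hv.le hℓ.le]
  set s := Real.sqrt (2*γ*(1-γ)*ℓ) with hs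
  have hsnn : 0 ≤ s := Real.sqrt_nonneg _
  have hssq : s^2 = 2*γ*(1-γ)*ℓ := Real.sq_sqrt hs0
  have hB0 : 0 < B := by
    rw [hB]
    have h1 : 0 < (2/3 + 1/(2*ε))*ℓ := by positivity
    have h2 : 0 < (1-ε)⁻¹ := inv_pos.2 h1ε
    nlinarith [Real.sqrt_nonneg (2*γ*(1-γ)*ℓ)]
  have ht0 : (0:ℝ) ≤ 2*B*ℓ := by positivity
  set t := Real.sqrt (2*B*ℓ) with ht
  have htnn : 0 ≤ t := Real.sqrt_nonneg _
  have htsq : t^2 = 2*B*ℓ := Real.sq_sqrt ht0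
  -- ε*B + ℓ/(2*ε) ≥ t
  have hεid : ε * B * (ℓ / (2*ε)) = B * ℓ / 2 := by field_simp
  have h2 : t ≤ ε*B + ℓ/(2*ε) := by
    have h2' : 2*B*ℓ ≤ (ε*B + ℓ/(2*ε))^2 := by
      nlinarith [sq_nonneg (ε*B - ℓ/(2*ε))]
    calc t ≤ Real.sqrt ((ε*B + ℓ/(2*ε))^2) := Real.sqrt_le_sqrt h2'
    _ = ε*B + ℓ/(2*ε) := Real.sqrt_sq (by positivity)
  -- B ≥ s + t
  have h3 : s + t ≤ B := by
    have : (1-ε) * B = s + (2/3)*ℓ + ℓ/(2*ε) := by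
      rw [hB]; field_simp; ring
    nlinarith
  nlinarith [mul_nonneg hsnn htnn]


lemma bernoulli_tail {Ω : Type*} [MeasurableSpace Ω] (μ : Measure Ω) [IsProbabilityMeasure μ]
    {n : ℕ} (A : Fin n → Set Ω) (hA : ∀ i, MeasurableSet (A i))
    (hind : iIndepFun (fun i => (A i).indicator (fun _ => (1:ℝ))) μ)
    {p γ : ℝ} (hγ0 : 0 < γ) (hγp : γ < p) (hp1 : p < 1)
    (hmean : ∀ i, p ≤ (μ (A i)).toReal) :
    (μ {ω | ∑ i, (A i).indicator (fun _ => (1:ℝ)) ω ≤ n * γ}).toReal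
      ≤ Real.exp (-(n:ℝ) * (γ * Real.log (γ/p) + (1-γ) * Real.log ((1-γ)/(1-p)))) := by
  have hp0 : 0 < p := lt_trans hγ0 hγp
  have h1p : 0 < 1 - p := by linarith
  have h1γ : 0 < 1 - γ := by linarith
  have harg : 0 < γ*(1-p)/(p*(1-γ)) := by positivity
  set t := Real.log (γ*(1-p)/(p*(1-γ))) with hts
  have ht : t ≤ 0 := Real.log_nonpos (by positivity) (by
    rw [div_le_one (by positivity)]; nlinarith)
  have het : Real.exp t = γ*(1-p)/(p*(1-γ)) := Real.exp_log harg
  set X : Fin n → Ω → ℝ := fun i => (A i).indicator (fun _ => (1:ℝ)) with hX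
  have hXmeas : ∀ i, Measurable (X i) := fun i => measurable_const.indicator (hA i)
  have hX01 : ∀ i ω, X i ω = 0 ∨ X i ω = 1 := by
    intro i ω
    by_cases h : ω ∈ A i
    · right; simp [hX, Set.indicator_of_mem h]
    · left; simp [hX, Set.indicator_of_notMem h]
  -- rewrite exp (t * X i ω)
  have hexp_eq : ∀ i, (fun ω => Real.exp (t * X i ω))
      = fun ω => (A i).indicator (fun _ => Real.exp t - 1) ω + 1 := by
    intro i
    funext ω
    by_cases h : ω ∈ A i
    · simp [hX, Set.indicator_of_mem h]
    · simp [hX, Set.indicator_of_notMem h]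
  have hint : ∀ i, Integrable (fun ω => Real.exp (t * X i ω)) μ := by
    intro i
    rw [hexp_eq i]
    exact ((integrable_const _).indicator (hA i)).add (integrable_const 1)
  have hmgf : ∀ i, mgf (X i) μ t = 1 + (μ (A i)).toReal * (Real.exp t - 1) := by
    intro i
    rw [mgf, hexp_eq i, integral_add ((integrable_const _).indicator (hA i)) (integrable_const 1),
      integral_indicator_const _ (hA i), integral_const]
    simp only [measureReal_def, measure_univ, ENNReal.toReal_one, smul_eq_mul, one_mul, mul_one]
    ring
  -- Chernoff
  have hXsum_meas : Measurable (∑ i, X i) := by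
    have heq : (∑ i, X i) = fun ω => ∑ i, X i ω := by funext ω; simp [Finset.sum_apply]
    rw [heq]
    exact Finset.measurable_sum _ (fun i _ => hXmeas i)
  have hint_sum : Integrable (fun ω => Real.exp (t * (∑ i, X i) ω)) μ := by
    apply (integrable_const (1:ℝ)).mono'
    · exact ((hXsum_meas.const_mul t).exp).aestronglyMeasurable
    · filter_upwards with ω
      rw [Real.norm_eq_abs, abs_of_pos (Real.exp_pos _)]
      apply Real.exp_le_one_iff.2
      apply mul_nonpos_of_nonpos_of_nonneg ht
      rw [Finset.sum_apply]
      apply Finset.sum_nonneg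
      intro i _
      rcases hX01 i ω with h | h <;> rw [h] <;> norm_num
  have chern := measure_le_le_exp_mul_mgf (X := ∑ i, X i) (μ := μ) ((n:ℝ) * γ) ht hint_sum
  have hset : {ω | ∑ i, X i ω ≤ n * γ} = {ω | (∑ i, X i) ω ≤ (n:ℝ) * γ} := by
    ext ω; simp [Finset.sum_apply]
  rw [hset]
  refine le_trans chern ?_
  rw [hind.mgf_sum hXmeas]
  -- bound each factor
  have hq : (0:ℝ) < (1-p)/(1-γ) := by positivity
  have hfac : ∀ i ∈ Finset.univ, mgf (X i) μ t ≤ (1-p)/(1-γ) := by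
    intro i _
    rw [hmgf i]
    have hpi : p ≤ (μ (A i)).toReal := hmean i
    have hpi1 : (μ (A i)).toReal ≤ 1 := by
      rw [← ENNReal.toReal_one]
      exact ENNReal.toReal_mono (by simp) prob_le_one
    have he1 : Real.exp t - 1 ≤ 0 := by
      rw [sub_nonpos]
      exact Real.exp_le_one_iff.2 ht
    have : 1 + (μ (A i)).toReal * (Real.exp t - 1) ≤ 1 + p * (Real.exp t - 1) := by
      nlinarith
    refine le_trans this (le_of_eq ?_)
    rw [het]
    field_simp
    ring
  have hprod : ∏ i, mgf (X i) μ t ≤ ((1-p)/(1-γ))^n := by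
    calc ∏ i, mgf (X i) μ t ≤ ∏ _i : Fin n, ((1-p)/(1-γ)) :=
      Finset.prod_le_prod (fun i _ => mgf_nonneg) hfac
    _ = ((1-p)/(1-γ))^n := by simp [div_pow]
  calc Real.exp (-t * ((n:ℝ)*γ)) * ∏ i, mgf (X i) μ t
      ≤ Real.exp (-t * ((n:ℝ)*γ)) * ((1-p)/(1-γ))^n := by
        apply mul_le_mul_of_nonneg_left hprod (le_of_lt (Real.exp_pos _))
    _ = Real.exp (-t * ((n:ℝ)*γ) + (n:ℝ) * Real.log ((1-p)/(1-γ))) := by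
        rw [Real.exp_add, Real.exp_nat_mul, Real.exp_log hq]
    _ = Real.exp (-(n:ℝ) * (γ * Real.log (γ/p) + (1-γ) * Real.log ((1-γ)/(1-p)))) := by
        congr 1
        rw [hts, Real.log_div (by positivity) (by positivity),
          Real.log_mul hγ0.ne' h1p.ne', Real.log_mul hp0.ne' h1γ.ne',
          Real.log_div hγ0.ne' hp0.ne', Real.log_div h1γ.ne' h1p.ne',
          Real.log_div h1p.ne' h1γ.ne']
        ring


set_option maxHeartbeats 1000000

/-- Concentration of the empirical quantile under distribution shift (right quantile):
for independent samples `x i` with continuous CDFs `F i` and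
`φ = max_i ‖F i - F (n-1)‖_∞`, with probability at least `1 - δ`,
`Fₙ(Q⁺_γ(F̂)) - γ ≤ φ + (1-ε)⁻¹ [√(2γ(1-γ)log(1/δ)/n) + (2/3 + 1/(2ε))·log(1/δ)/n]`. -/
theorem stmt10 {Ω : Type*} [MeasurableSpace Ω] (μ : Measure Ω) [IsProbabilityMeasure μ]
    {n : ℕ} (hn : 0 < n) (x : Fin n → Ω → ℝ)
    (hmeas : ∀ i, Measurable (x i))
    (hind : iIndepFun x μ)
    (F : Fin n → ℝ → ℝ)
    (hF : ∀ i t, F i t = (μ {ω | x i ω ≤ t}).toReal)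
    (hcont : ∀ i, Continuous (F i))
    (φ : ℝ)
    (hφ : φ = ⨆ i : Fin n, ⨆ t : ℝ, |F i t - F ⟨n - 1, Nat.sub_lt hn Nat.one_pos⟩ t|)
    (γ δ ε : ℝ) (hγ : γ ∈ Set.Ioo (0 : ℝ) 1) (hδ : δ ∈ Set.Ioo (0 : ℝ) 1)
    (hε : ε ∈ Set.Ioo (0 : ℝ) 1) :
    1 - δ ≤ (μ {ω | F ⟨n - 1, Nat.sub_lt hn Nat.one_pos⟩
        (Qplus γ (ecdf (fun i => x i ω))) - γ ≤
        φ + (1 - ε)⁻¹ * (Real.sqrt (2 * γ * (1 - γ) * Real.log (1 / δ) / n) +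
          (2 / 3 + 1 / (2 * ε)) * Real.log (1 / δ) / n)}).toReal := by
  classical
  obtain ⟨hγ0, hγ1⟩ := hγ
  obtain ⟨hδ0, hδ1⟩ := hδ
  obtain ⟨hε0, hε1⟩ := hε
  set k : Fin n := ⟨n - 1, Nat.sub_lt hn Nat.one_pos⟩ with hk
  set L : ℝ := Real.log (1 / δ) with hL
  have hL0 : 0 < L := Real.log_pos (by rw [lt_div_iff₀ hδ0]; linarith)
  have hnR : (0:ℝ) < n := Nat.cast_pos.2 hn
  set ℓ : ℝ := L / n with hℓdef
  have hℓ0 : 0 < ℓ := div_pos hL0 hnR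
  set B : ℝ := (1 - ε)⁻¹ * (Real.sqrt (2 * γ * (1 - γ) * L / n) +
      (2 / 3 + 1 / (2 * ε)) * L / n) with hBdef
  have h1ε : (0:ℝ) < 1 - ε := by linarith
  have hBℓ : B = (1 - ε)⁻¹ * (Real.sqrt (2*γ*(1-γ)*ℓ) + (2/3 + 1/(2*ε))*ℓ) := by
    rw [hBdef, hℓdef, mul_div_assoc, mul_div_assoc]
  have hB0 : 0 < B := by
    rw [hBℓ]
    have h1 : 0 < (2/3 + 1/(2*ε))*ℓ := by positivity
    have h2 : 0 < (1-ε)⁻¹ := inv_pos.2 h1ε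
    nlinarith [Real.sqrt_nonneg (2*γ*(1-γ)*ℓ)]
  -- basic facts about F
  have hF0 : ∀ i t, 0 ≤ F i t := fun i t => by rw [hF]; exact ENNReal.toReal_nonneg
  have hF1 : ∀ i t, F i t ≤ 1 := by
    intro i t
    rw [hF]
    rw [← ENNReal.toReal_one]
    exact ENNReal.toReal_mono (by simp) prob_le_one
  have hFmono : ∀ i, Monotone (F i) := by
    intro i t t' htt'
    rw [hF, hF]
    exact ENNReal.toReal_mono (measure_ne_top _ _)
      (measure_mono (fun ω hω => le_trans hω htt'))
  have hφle : ∀ i t, |F i t - F k t| ≤ φ := by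
    intro i t
    rw [hφ]
    have hbdd : ∀ j : Fin n, BddAbove (Set.range (fun t => |F j t - F k t|)) := by
      intro j
      refine ⟨2, ?_⟩
      rintro y ⟨u, rfl⟩
      have := hF0 j u; have := hF1 j u; have := hF0 k u; have := hF1 k u
      rw [abs_le]; constructor <;> linarith
    calc |F i t - F k t| ≤ ⨆ u : ℝ, |F i u - F k u| := le_ciSup (hbdd i) t
    _ ≤ ⨆ j : Fin n, ⨆ u : ℝ, |F j u - F k u| := by
        apply le_ciSup (f := fun j : Fin n => ⨆ u : ℝ, |F j u - F k u|)
        exact Set.Finite.bddAbove (Set.finite_range _)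
  have hφ0 : 0 ≤ φ := by
    have := hφle k 0
    simp at this
    linarith [abs_nonneg (F k 0 - F k 0), hφle k 0]
  by_cases hcase : 1 ≤ γ + φ + B
  · -- trivial case: the inequality always holds
    have huniv : {ω | F k (Qplus γ (ecdf (fun i => x i ω))) - γ ≤ φ + B} = Set.univ := by
      apply Set.eq_univ_of_forall
      intro ω
      have := hF1 k (Qplus γ (ecdf (fun i => x i ω)))
      simp only [Set.mem_setOf_eq]
      linarith
    rw [hBdef] at huniv
    rw [huniv]
    simp only [measure_univ, ENNReal.toReal_one]
    linarith
  · push_neg at hcase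
    set τ : ℝ := γ + φ + B with hτ
    have hτ0 : 0 < τ := by positivity
    -- find s with F k s = τ
    have hcdf_eq : F k = fun t => ProbabilityTheory.cdf (μ.map (x k)) t := by
      funext t
      have : IsProbabilityMeasure (μ.map (x k)) :=
        Measure.isProbabilityMeasure_map (hmeas k).aemeasurable
      rw [hF, ProbabilityTheory.cdf_eq_real, measureReal_def, Measure.map_apply (hmeas k) measurableSet_Iic]
      rfl
    have hbot : Filter.Tendsto (F k) Filter.atBot (nhds 0) := by
      rw [hcdf_eq]
      have : IsProbabilityMeasure (μ.map (x k)) :=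
        Measure.isProbabilityMeasure_map (hmeas k).aemeasurable
      exact ProbabilityTheory.tendsto_cdf_atBot _
    have htop : Filter.Tendsto (F k) Filter.atTop (nhds 1) := by
      rw [hcdf_eq]
      have : IsProbabilityMeasure (μ.map (x k)) :=
        Measure.isProbabilityMeasure_map (hmeas k).aemeasurable
      exact ProbabilityTheory.tendsto_cdf_atTop _
    obtain ⟨a, ha⟩ : ∃ a, F k a < τ := (hbot.eventually (gt_mem_nhds hτ0)).exists
    obtain ⟨b, hb⟩ : ∃ b, τ < F k b := (htop.eventually (lt_mem_nhds hcase)).exists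
    obtain ⟨s, _, hs⟩ : ∃ s ∈ Set.Icc (min a b) b, F k s = τ := by
      have hab : min a b ≤ b := min_le_right a b
      have hsub := intermediate_value_Icc hab ((hcont k).continuousOn)
      have hmem : τ ∈ Set.Icc (F k (min a b)) (F k b) := by
        constructor
        · exact le_of_lt (lt_of_le_of_lt (hFmono k (min_le_left a b)) ha)
        · exact le_of_lt hb
      obtain ⟨s, hs1, hs2⟩ := hsub hmem
      exact ⟨s, hs1, hs2⟩
    -- the Bernoulli parameters
    set p : ℝ := γ + B with hp
    have hγp : γ < p := by linarith
    have hp1 : p < 1 := by linarith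
    set A : Fin n → Set Ω := fun i => {ω | x i ω ≤ s} with hA
    have hAmeas : ∀ i, MeasurableSet (A i) := fun i => (hmeas i) measurableSet_Iic
    have hmean : ∀ i, p ≤ (μ (A i)).toReal := by
      intro i
      have h1 : F k s - F i s ≤ φ := by
        have := hφle i s
        rw [abs_le] at this
        linarith [this.1]
      have : p ≤ F i s := by rw [hs] at h1; linarith
      rw [hF] at this
      exact this
    have hind' : iIndepFun
        (fun i => (A i).indicator (fun _ => (1:ℝ))) μ := by
      have heq : (fun i => (A i).indicator (fun _ => (1:ℝ)))
          = fun i => ((Set.Iic s).indicator (fun _ => (1:ℝ))) ∘ (x i) := by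
        funext i ω
        simp only [Function.comp_apply, Set.indicator_apply, hA, Set.mem_setOf_eq, Set.mem_Iic]
      rw [heq]
      exact hind.comp _ (fun i => measurable_const.indicator measurableSet_Iic)
    have bern := bernoulli_tail μ A hAmeas hind' hγ0 hγp hp1 hmean
    -- exp bound ≤ δ
    have hklge := kl_ge hγ0 hB0 (by linarith : γ + B < 1)
    have hchain := cond_chain hγ0 hγ1 hε0 hε1 hℓ0 hBℓ
    have hvB : 0 < 2*(γ*(1-γ)+B) := by nlinarith
    have hℓle : ℓ ≤ γ * Real.log (γ/p) + (1-γ) * Real.log ((1-γ)/(1-p)) := by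
      have h1 : ℓ ≤ B^2/(2*(γ*(1-γ)+B)) := by
        rw [le_div_iff₀ hvB]
        linarith [hchain, mul_comm ℓ (2*(γ*(1-γ)+B))]
      have h2 : (1:ℝ) - γ - B = 1 - p := by rw [hp]; ring
      have h3 : γ + B = p := rfl
      rw [h2, h3] at hklge
      linarith
    have hexp_le : Real.exp (-(n:ℝ) * (γ * Real.log (γ/p) + (1-γ) * Real.log ((1-γ)/(1-p)))) ≤ δ := by
      have h1 : -(n:ℝ) * (γ * Real.log (γ/p) + (1-γ) * Real.log ((1-γ)/(1-p))) ≤ -(n:ℝ) * ℓ := by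
        have := mul_le_mul_of_nonneg_left hℓle (le_of_lt hnR)
        linarith
      have h2 : (n:ℝ) * ℓ = L := by
        rw [hℓdef]; field_simp
      calc Real.exp (-(n:ℝ) * (γ * Real.log (γ/p) + (1-γ) * Real.log ((1-γ)/(1-p))))
          ≤ Real.exp (-(n:ℝ) * ℓ) := Real.exp_le_exp.2 h1
      _ = Real.exp (-L) := by rw [neg_mul, h2]
      _ = δ := by
          rw [hL, Real.exp_neg, Real.exp_log (by positivity)]
          simp
    -- inclusion of the complement
    set E : Set Ω := {ω | F k (Qplus γ (ecdf (fun i => x i ω))) - γ ≤ φ + B} with hE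
    set M : Set Ω := {ω | ∑ i, (A i).indicator (fun _ => (1:ℝ)) ω ≤ (n:ℝ) * γ} with hM
    have hsub : Eᶜ ⊆ M := by
      intro ω hω
      simp only [hE, Set.mem_compl_iff, Set.mem_setOf_eq, not_le] at hω
      -- F k Q > τ = F k s, so s < Q
      set Q : ℝ := Qplus γ (ecdf (fun i => x i ω)) with hQ
      have hsQ : s < Q := by
        by_contra h
        push_neg at h
        have := hFmono k h
        rw [hs] at this
        have : F k Q ≤ γ + φ + B := this
        linarith
      -- so ecdf at s is ≤ γ
      have hecdf : ecdf (fun i => x i ω) s ≤ γ := by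
        by_contra h
        push_neg at h
        have hne : (Finset.univ : Finset (Fin n)).Nonempty := by
          exact ⟨⟨0, hn⟩, Finset.mem_univ _⟩
        have hbdd : BddBelow {y : ℝ | γ < ecdf (fun i => x i ω) y} := by
          refine ⟨Finset.univ.inf' hne (fun i => x i ω), ?_⟩
          intro y hy
          by_contra hyc
          push_neg at hyc
          have hempty : (Finset.univ.filter (fun i => x i ω ≤ y)) = ∅ := by
            apply Finset.filter_eq_empty_iff.2
            intro i _
            have hle : Finset.univ.inf' hne (fun j => x j ω) ≤ x i ω :=
              Finset.inf'_le (fun j => x j ω) (Finset.mem_univ i)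
            push_neg
            linarith
          have hzero : ecdf (fun i => x i ω) y = 0 := by
            simp only [ecdf, hempty]
            simp
          rw [Set.mem_setOf_eq, hzero] at hy
          linarith [hy]
        have : Q ≤ s := csInf_le hbdd h
        linarith
      -- count to sum
      have hcard : ((Finset.univ.filter (fun i => x i ω ≤ s)).card : ℝ) ≤ (n:ℝ) * γ := by
        rw [ecdf, div_le_iff₀ hnR] at hecdf
        linarith
      simp only [hM, Set.mem_setOf_eq]
      have hsum : ∑ i, (A i).indicator (fun _ => (1:ℝ)) ω
          = ((Finset.univ.filter (fun i => x i ω ≤ s)).card : ℝ) := by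
        rw [← Finset.sum_boole]
        apply Finset.sum_congr rfl
        intro i _
        simp only [Set.indicator_apply, hA, Set.mem_setOf_eq]
      rw [hsum]
      exact hcard
    -- measure arithmetic
    have hEM : (μ Eᶜ).toReal ≤ (μ M).toReal :=
      ENNReal.toReal_mono (measure_ne_top _ _) (measure_mono hsub)
    have hbern' : (μ M).toReal ≤ δ := le_trans bern hexp_le
    have hMtoReal : (μ Eᶜ).toReal ≤ δ := le_trans hEM hbern'
    have hunion : (1:ENNReal) ≤ μ E + μ Eᶜ := by
      calc (1:ENNReal) = μ Set.univ := (measure_univ).symm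
      _ = μ (E ∪ Eᶜ) := by rw [Set.union_compl_self]
      _ ≤ μ E + μ Eᶜ := measure_union_le E Eᶜ
    have hfinsum : μ E + μ Eᶜ ≠ ⊤ := by
      apply ENNReal.add_ne_top.2
      exact ⟨measure_ne_top _ _, measure_ne_top _ _⟩
    have h1le : (1:ℝ) ≤ (μ E).toReal + (μ Eᶜ).toReal := by
      have := ENNReal.toReal_mono hfinsum hunion
      rwa [ENNReal.toReal_one, ENNReal.toReal_add (measure_ne_top _ _) (measure_ne_top _ _)] at this
    have hgoal : 1 - δ ≤ (μ E).toReal := by linarith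
    rw [hE, hBdef] at hgoal
    exact hgoal
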